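/- No bit-fixing-robust multi-round extraction from Santha-Vazirani sources: for any function g : {0,1}^n → {0,1} and any δ ∈ (0, 1/2), there exists a δ-Santha-Vazirani source X on {0,1}^n such that either Pr[g(X) = 1] ≥ 1 - δ or Pr[g(X) = 1] ≤ δ. -/
import Mathlib

open scoped Classical

noncomputable def svVal (δ : ℝ) : (n : ℕ) → ((Fin n → Bool) → Bool) → ℝ
  | 0, g => if g (fun i => i.elim0) then 1 else 0
  | n+1, g =>
      (1-δ) * min (svVal δ n (fun y => g (Fin.cons false y))) (svVal δ n (fun y => g (Fin.cons true y)))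
      + δ * max (svVal δ n (fun y => g (Fin.cons false y))) (svVal δ n (fun y => g (Fin.cons true y)))

noncomputable def svW (δ : ℝ) (n : ℕ) (g : (Fin (n+1) → Bool) → Bool) : ℝ :=
  if svVal δ n (fun y => g (Fin.cons true y)) < svVal δ n (fun y => g (Fin.cons false y)) then 1-δ else δ

noncomputable def svP (δ : ℝ) : (n : ℕ) → ((Fin n → Bool) → Bool) → (Fin n → Bool) → ℝ
  | 0, _, _ => 1
  | n+1, g, x => (if x 0 = true then svW δ n g else 1 - svW δ n g)
      * svP δ n (fun y => g (Fin.cons (x 0) y)) (Fin.tail x)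

lemma sv_sum_cons {n : ℕ} (f : (Fin (n+1) → Bool) → ℝ) :
    ∑ z, f z = (∑ y : Fin n → Bool, f (Fin.cons false y)) + (∑ y : Fin n → Bool, f (Fin.cons true y)) := by
  rw [← (Fin.consEquiv (fun _ : Fin (n+1) => Bool)).sum_comp f]
  rw [Fintype.sum_prod_type]
  simp [Fin.consEquiv, Fintype.sum_bool, add_comm]

lemma svW_bounds {δ : ℝ} (hδ1 : δ < 1/2) (n : ℕ) (g : (Fin (n+1) → Bool) → Bool) :
    δ ≤ svW δ n g ∧ svW δ n g ≤ 1 - δ := by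
  unfold svW; split <;> constructor <;> linarith

lemma svP_cons {δ : ℝ} {n : ℕ} (g : (Fin (n+1) → Bool) → Bool) (b : Bool) (y : Fin n → Bool) :
    svP δ (n+1) g (Fin.cons b y)
      = (if b = true then svW δ n g else 1 - svW δ n g) * svP δ n (fun z => g (Fin.cons b z)) y := by
  simp [svP, Fin.cons_zero, Fin.tail_cons]

lemma svP_nonneg {δ : ℝ} (hδ0 : 0 < δ) (hδ1 : δ < 1/2) :
    ∀ (n : ℕ) (g : (Fin n → Bool) → Bool) (x : Fin n → Bool), 0 ≤ svP δ n g x := by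
  intro n
  induction n with
  | zero => intro g x; simp [svP]
  | succ n ih =>
    intro g x
    have hb := svW_bounds hδ1 n g
    have h1 : (0:ℝ) ≤ (if x 0 = true then svW δ n g else 1 - svW δ n g) := by
      split <;> linarith
    exact mul_nonneg h1 (ih _ _)

lemma svP_sum {δ : ℝ} : ∀ (n : ℕ) (g : (Fin n → Bool) → Bool), ∑ x, svP δ n g x = 1 := by
  intro n
  induction n with
  | zero => simp [svP]
  | succ n ih =>
    intro g
    rw [sv_sum_cons]
    simp only [svP_cons]
    rw [← Finset.mul_sum, ← Finset.mul_sum, ih, ih]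
    simp

lemma svVal_succ {δ : ℝ} {n : ℕ} (g : (Fin (n+1) → Bool) → Bool) :
    svVal δ (n+1) g = (1 - svW δ n g) * svVal δ n (fun y => g (Fin.cons false y))
      + svW δ n g * svVal δ n (fun y => g (Fin.cons true y)) := by
  simp only [svVal, svW]
  rcases lt_or_ge (svVal δ n (fun y => g (Fin.cons true y))) (svVal δ n (fun y => g (Fin.cons false y))) with h | h
  · rw [if_pos h, min_eq_right h.le, max_eq_left h.le]; ring
  · rw [if_neg (not_lt.2 h), min_eq_left h, max_eq_right h]
    try ring

lemma svP_val {δ : ℝ} : ∀ (n : ℕ) (g : (Fin n → Bool) → Bool),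
    (∑ x, if g x then svP δ n g x else 0) = svVal δ n g := by
  intro n
  induction n with
  | zero =>
    intro g
    have h1 : ∀ x : Fin 0 → Bool, (if g x then svP δ 0 g x else 0) = svVal δ 0 g := by
      intro x
      rw [show x = (fun i => i.elim0) from Subsingleton.elim _ _]
      simp [svP, svVal]
    rw [Finset.sum_congr rfl (fun x _ => h1 x), Finset.sum_const]
    simp
  | succ n ih =>
    intro g
    rw [sv_sum_cons]
    have hbr : ∀ b : Bool, (∑ y : Fin n → Bool, if g (Fin.cons b y) then svP δ (n+1) g (Fin.cons b y) else 0)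
        = (if b = true then svW δ n g else 1 - svW δ n g) * svVal δ n (fun y => g (Fin.cons b y)) := by
      intro b
      rw [← ih (fun y => g (Fin.cons b y)), Finset.mul_sum]
      refine Finset.sum_congr rfl fun y _ => ?_
      rw [svP_cons]
      split <;> simp
    rw [hbr, hbr, svVal_succ]
    simp

lemma phi_le_combo {δ : ℝ} (x y c : ℝ) (hc1 : δ ≤ c) (hc2 : c ≤ 1 - δ) :
    (1-δ) * min x y + δ * max x y ≤ c * x + (1-c) * y := by
  rcases le_total x y with h | h
  · rw [min_eq_left h, max_eq_right h]
    nlinarith [mul_nonneg (by linarith : (0:ℝ) ≤ 1 - δ - c) (by linarith : (0:ℝ) ≤ y - x)]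
  · rw [min_eq_right h, max_eq_left h]
    nlinarith [mul_nonneg (by linarith : (0:ℝ) ≤ c - δ) (by linarith : (0:ℝ) ≤ x - y)]

lemma phi_four {δ a b a' b' : ℝ} (hδ0 : 0 < δ) (hδ1 : δ < 1/2)
    (Ha : (1-δ) * min a a' + δ * max a a' ≤ δ)
    (Hb : (1-δ) * min b b' + δ * max b b' ≤ δ) :
    (1-δ) * min ((1-δ) * min a b + δ * max a b) ((1-δ) * min a' b' + δ * max a' b')
      + δ * max ((1-δ) * min a b + δ * max a b) ((1-δ) * min a' b' + δ * max a' b') ≤ δ := by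
  set X := (1-δ) * min a b + δ * max a b with hX
  set Y := (1-δ) * min a' b' + δ * max a' b' with hY
  rcases le_total a a' with h1 | h1 <;> rcases le_total b b' with h2 | h2
  · -- a ≤ a', b ≤ b'
    rw [min_eq_left h1, max_eq_right h1] at Ha
    rw [min_eq_left h2, max_eq_right h2] at Hb
    have hphi : (1-δ) * min X Y + δ * max X Y ≤ (1-δ) * X + δ * Y := by
      have := phi_le_combo (δ:=δ) X Y (1-δ) (by linarith) (by linarith)
      linarith
    have hXle : X ≤ (1/2) * a + (1/2) * b := by
      have := phi_le_combo (δ:=δ) a b (1/2) (by linarith) (by linarith)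
      linarith
    have hYle : Y ≤ (1/2) * a' + (1/2) * b' := by
      have := phi_le_combo (δ:=δ) a' b' (1/2) (by linarith) (by linarith)
      linarith
    nlinarith [mul_le_mul_of_nonneg_left hXle (by linarith : (0:ℝ) ≤ 1-δ),
      mul_le_mul_of_nonneg_left hYle hδ0.le]
  · -- a ≤ a', b' ≤ b
    rw [min_eq_left h1, max_eq_right h1] at Ha
    rw [min_eq_right h2, max_eq_left h2] at Hb
    have hphi : (1-δ) * min X Y + δ * max X Y ≤ (1/2) * X + (1/2) * Y := by
      have := phi_le_combo (δ:=δ) X Y (1/2) (by linarith) (by linarith)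
      linarith
    have hXle : X ≤ (1-δ) * a + δ * b := by
      have := phi_le_combo (δ:=δ) a b (1-δ) (by linarith) (by linarith)
      linarith
    have hYle : Y ≤ δ * a' + (1-δ) * b' := by
      have := phi_le_combo (δ:=δ) a' b' δ le_rfl (by linarith)
      linarith
    linarith
  · -- a' ≤ a, b ≤ b'
    rw [min_eq_right h1, max_eq_left h1] at Ha
    rw [min_eq_left h2, max_eq_right h2] at Hb
    have hphi : (1-δ) * min X Y + δ * max X Y ≤ (1/2) * X + (1/2) * Y := by
      have := phi_le_combo (δ:=δ) X Y (1/2) (by linarith) (by linarith)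
      linarith
    have hXle : X ≤ δ * a + (1-δ) * b := by
      have := phi_le_combo (δ:=δ) a b δ le_rfl (by linarith)
      linarith
    have hYle : Y ≤ (1-δ) * a' + δ * b' := by
      have := phi_le_combo (δ:=δ) a' b' (1-δ) (by linarith) (by linarith)
      linarith
    linarith
  · -- a' ≤ a, b' ≤ b
    rw [min_eq_right h1, max_eq_left h1] at Ha
    rw [min_eq_right h2, max_eq_left h2] at Hb
    have hphi : (1-δ) * min X Y + δ * max X Y ≤ δ * X + (1-δ) * Y :=
      phi_le_combo X Y δ le_rfl (by linarith)
    have hXle : X ≤ (1/2) * a + (1/2) * b := by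
      have := phi_le_combo (δ:=δ) a b (1/2) (by linarith) (by linarith)
      linarith
    have hYle : Y ≤ (1/2) * a' + (1/2) * b' := by
      have := phi_le_combo (δ:=δ) a' b' (1/2) (by linarith) (by linarith)
      linarith
    nlinarith [mul_le_mul_of_nonneg_left hXle hδ0.le,
      mul_le_mul_of_nonneg_left hYle (by linarith : (0:ℝ) ≤ 1-δ)]

lemma sv_invariant {δ : ℝ} (hδ0 : 0 < δ) (hδ1 : δ < 1/2) :
    ∀ (n : ℕ) (g : (Fin n → Bool) → Bool),
      (1-δ) * min (svVal δ n g) (svVal δ n (fun x => !(g x)))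
        + δ * max (svVal δ n g) (svVal δ n (fun x => !(g x))) ≤ δ := by
  intro n
  induction n with
  | zero =>
    intro g
    simp only [svVal]
    rcases Bool.eq_false_or_eq_true (g (fun i => i.elim0)) with hg | hg <;>
      simp [hg, min_def, max_def] <;> split_ifs <;> linarith
  | succ n ih =>
    intro g
    have e1 : svVal δ (n+1) g
        = (1-δ) * min (svVal δ n (fun y => g (Fin.cons false y))) (svVal δ n (fun y => g (Fin.cons true y)))
          + δ * max (svVal δ n (fun y => g (Fin.cons false y))) (svVal δ n (fun y => g (Fin.cons true y))) := rfl
    have e2 : svVal δ (n+1) (fun x => !(g x))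
        = (1-δ) * min (svVal δ n (fun y => !(g (Fin.cons false y)))) (svVal δ n (fun y => !(g (Fin.cons true y))))
          + δ * max (svVal δ n (fun y => !(g (Fin.cons false y)))) (svVal δ n (fun y => !(g (Fin.cons true y)))) := rfl
    rw [e1, e2]
    exact phi_four hδ0 hδ1 (ih (fun y => g (Fin.cons false y))) (ih (fun y => g (Fin.cons true y)))

lemma sum_ite_mul {κ : Type*} [Fintype κ] (c : ℝ) (q : κ → Prop) [DecidablePred q] (p : κ → ℝ) :
    (∑ y, if q y then c * p y else 0) = c * ∑ y, (if q y then p y else 0) := by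
  rw [Finset.mul_sum]
  exact Finset.sum_congr rfl fun y _ => by split <;> simp

lemma prefix_succ_iff {n : ℕ} (z x : Fin (n+1) → Bool) (i : Fin n) :
    (∀ j : Fin (n+1), j < i.succ → z j = x j)
      ↔ (z 0 = x 0 ∧ ∀ j : Fin n, j < i → Fin.tail z j = Fin.tail x j) := by
  constructor
  · intro h
    exact ⟨h 0 (Fin.succ_pos i), fun j hj => h j.succ (by rwa [Fin.succ_lt_succ_iff])⟩
  · rintro ⟨h0, h⟩ j hj
    induction j using Fin.cases with
    | zero => exact h0
    | succ k => exact h k (by rwa [Fin.succ_lt_succ_iff] at hj)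

lemma svP_SV {δ : ℝ} (hδ0 : 0 < δ) (hδ1 : δ < 1/2) :
    ∀ (n : ℕ) (g : (Fin n → Bool) → Bool) (i : Fin n) (x : Fin n → Bool),
      δ * (∑ y, if (∀ j, j < i → y j = x j) then svP δ n g y else 0)
          ≤ (∑ y, if (∀ j, j < i → y j = x j) ∧ y i = true then svP δ n g y else 0)
      ∧ (∑ y, if (∀ j, j < i → y j = x j) ∧ y i = true then svP δ n g y else 0)
          ≤ (1 - δ) * (∑ y, if (∀ j, j < i → y j = x j) then svP δ n g y else 0) := by
  intro n
  induction n with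
  | zero => intro g i; exact i.elim0
  | succ n ih =>
    intro g i x
    have hwb := svW_bounds (δ := δ) hδ1 n g
    induction i using Fin.cases with
    | zero =>
      have hS : (∑ y, if (∀ j, j < (0 : Fin (n+1)) → y j = x j) then svP δ (n+1) g y else 0) = 1 := by
        rw [← svP_sum (δ := δ) (n+1) g]
        refine Finset.sum_congr rfl fun y _ => ?_
        rw [if_pos (fun j hj => absurd hj (Fin.not_lt_zero j))]
      have hS1 : (∑ y, if (∀ j, j < (0 : Fin (n+1)) → y j = x j) ∧ y 0 = true then svP δ (n+1) g y else 0)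
          = svW δ n g := by
        have he : ∀ y : Fin (n+1) → Bool,
            (if (∀ j, j < (0 : Fin (n+1)) → y j = x j) ∧ y 0 = true then svP δ (n+1) g y else 0)
            = (if y 0 = true then svP δ (n+1) g y else 0) := by
          intro y
          refine if_congr ?_ rfl rfl
          constructor
          · exact fun h => h.2
          · exact fun h => ⟨fun j hj => absurd hj (Fin.not_lt_zero j), h⟩
        rw [Finset.sum_congr rfl fun y _ => he y,
          sv_sum_cons (f := fun z => if z 0 = true then svP δ (n+1) g z else 0)]
        simp only [Fin.cons_zero, svP_cons, Bool.false_eq_true, if_false, ite_false, if_true,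
          ite_true, Finset.sum_const_zero, zero_add, eq_self_iff_true]
        rw [← Finset.mul_sum, svP_sum, mul_one]
      rw [hS, hS1, mul_one, mul_one]
      exact hwb
    | succ i' =>
      have IH := ih (fun z => g (Fin.cons (x 0) z)) i' (Fin.tail x)
      have hb : ∀ (b : Bool) (y : Fin n → Bool),
          (if (∀ j, j < Fin.succ i' → (Fin.cons b y : Fin (n+1) → Bool) j = x j) then svP δ (n+1) g (Fin.cons b y) else 0)
          = (if (b = x 0 ∧ ∀ j, j < i' → y j = Fin.tail x j)
             then (if b = true then svW δ n g else 1 - svW δ n g)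
               * svP δ n (fun z => g (Fin.cons b z)) y else 0) := by
        intro b y
        rw [svP_cons]
        refine if_congr ?_ rfl rfl
        rw [prefix_succ_iff (Fin.cons b y) x i', Fin.cons_zero, Fin.tail_cons]
      have hb1 : ∀ (b : Bool) (y : Fin n → Bool),
          (if (∀ j, j < Fin.succ i' → (Fin.cons b y : Fin (n+1) → Bool) j = x j) ∧ (Fin.cons b y : Fin (n+1) → Bool) (Fin.succ i') = true
            then svP δ (n+1) g (Fin.cons b y) else 0)
          = (if (b = x 0 ∧ ((∀ j, j < i' → y j = Fin.tail x j) ∧ y i' = true))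
             then (if b = true then svW δ n g else 1 - svW δ n g)
               * svP δ n (fun z => g (Fin.cons b z)) y else 0) := by
        intro b y
        rw [svP_cons]
        refine if_congr ?_ rfl rfl
        rw [prefix_succ_iff (Fin.cons b y) x i', Fin.cons_zero, Fin.tail_cons, Fin.cons_succ,
          and_assoc]
      have hS : (∑ y, if (∀ j, j < Fin.succ i' → y j = x j) then svP δ (n+1) g y else 0)
          = (if x 0 = true then svW δ n g else 1 - svW δ n g)
            * (∑ y, if (∀ j, j < i' → y j = Fin.tail x j)
                then svP δ n (fun z => g (Fin.cons (x 0) z)) y else 0) := by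
        rw [sv_sum_cons (f := fun z => if (∀ j, j < Fin.succ i' → z j = x j) then svP δ (n+1) g z else 0)]
        rw [Finset.sum_congr rfl fun y _ => hb false y, Finset.sum_congr rfl fun y _ => hb true y]
        rcases Bool.eq_false_or_eq_true (x 0) with hx0 | hx0 <;> rw [hx0] <;>
          simp only [eq_self_iff_true, true_and, Bool.true_eq_false, Bool.false_eq_true, false_and,
            if_true, if_false, ite_true, ite_false, Finset.sum_const_zero, add_zero, zero_add] <;>
          rw [sum_ite_mul]
      have hS1 : (∑ y, if (∀ j, j < Fin.succ i' → y j = x j) ∧ y (Fin.succ i') = true then svP δ (n+1) g y else 0)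
          = (if x 0 = true then svW δ n g else 1 - svW δ n g)
            * (∑ y, if (∀ j, j < i' → y j = Fin.tail x j) ∧ y i' = true
                then svP δ n (fun z => g (Fin.cons (x 0) z)) y else 0) := by
        rw [sv_sum_cons (f := fun z => if (∀ j, j < Fin.succ i' → z j = x j) ∧ z (Fin.succ i') = true then svP δ (n+1) g z else 0)]
        rw [Finset.sum_congr rfl fun y _ => hb1 false y, Finset.sum_congr rfl fun y _ => hb1 true y]
        rcases Bool.eq_false_or_eq_true (x 0) with hx0 | hx0 <;> rw [hx0] <;>
          simp only [eq_self_iff_true, true_and, Bool.true_eq_false, Bool.false_eq_true, false_and,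
            if_true, if_false, ite_true, ite_false, Finset.sum_const_zero, add_zero, zero_add] <;>
          rw [sum_ite_mul]
      have hw0 : 0 ≤ (if x 0 = true then svW δ n g else 1 - svW δ n g) := by
        split <;> linarith [hwb.1, hwb.2]
      rw [hS, hS1]
      constructor
      · rw [mul_left_comm]
        exact mul_le_mul_of_nonneg_left IH.1 hw0
      · rw [mul_left_comm]
        exact mul_le_mul_of_nonneg_left IH.2 hw0

/-- Vadhan, Prop. 6.6: For any g : {0,1}^n → {0,1} and any
δ ∈ (0, 1/2), there is a δ-Santha–Vazirani source X on {0,1}^n (every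
conditional bit probability lies in [δ, 1-δ], stated in the multiplied form
δ·Pr[prefix] ≤ Pr[prefix ∧ X_i = 1] ≤ (1-δ)·Pr[prefix]) such that either
Pr[g(X) = 1] ≥ 1 - δ or Pr[g(X) = 1] ≤ δ. -/
theorem sv_source_biases_any_function (n : ℕ) (g : (Fin n → Bool) → Bool)
    (δ : ℝ) (hδ0 : 0 < δ) (hδ1 : δ < 1 / 2) :
    ∃ p : (Fin n → Bool) → ℝ,
      (∀ x, 0 ≤ p x) ∧ (∑ x, p x = 1) ∧
      (∀ i : Fin n, ∀ x : Fin n → Bool,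
        δ * (∑ y, if (∀ j, j < i → y j = x j) then p y else 0)
            ≤ (∑ y, if (∀ j, j < i → y j = x j) ∧ y i = true then p y else 0)
          ∧
        (∑ y, if (∀ j, j < i → y j = x j) ∧ y i = true then p y else 0)
            ≤ (1 - δ) * (∑ y, if (∀ j, j < i → y j = x j) then p y else 0)) ∧
      (1 - δ ≤ (∑ x, if g x then p x else 0)
        ∨ (∑ x, if g x then p x else 0) ≤ δ) := by
  have hinv := sv_invariant hδ0 hδ1 n g
  have hmaxmin : min (svVal δ n g) (svVal δ n (fun x => !(g x)))
      ≤ max (svVal δ n g) (svVal δ n (fun x => !(g x))) := min_le_max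
  have hmin : min (svVal δ n g) (svVal δ n (fun x => !(g x))) ≤ δ := by
    nlinarith [mul_nonneg hδ0.le (sub_nonneg.2 hmaxmin)]
  rcases le_or_gt (svVal δ n g) δ with h | h
  · refine ⟨svP δ n g, fun x => svP_nonneg hδ0 hδ1 n g x, svP_sum n g,
      fun i x => svP_SV hδ0 hδ1 n g i x, Or.inr ?_⟩
    rw [svP_val]
    exact h
  · have h2 : svVal δ n (fun x => !(g x)) ≤ δ := by
      rcases le_total (svVal δ n (fun x => !(g x))) (svVal δ n g) with hc | hc
      · rwa [min_eq_right hc] at hmin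
      · rw [min_eq_left hc] at hmin; linarith
    refine ⟨svP δ n (fun x => !(g x)), fun x => svP_nonneg hδ0 hδ1 n _ x, svP_sum n _,
      fun i x => svP_SV hδ0 hδ1 n _ i x, Or.inl ?_⟩
    have hsum := svP_sum (δ := δ) n (fun x => !(g x))
    have hval := svP_val (δ := δ) n (fun x => !(g x))
    have hsplit : (∑ x, if g x then svP δ n (fun x => !(g x)) x else 0)
        = 1 - svVal δ n (fun x => !(g x)) := by
      rw [← hsum, ← hval, eq_sub_iff_add_eq, ← Finset.sum_add_distrib]
      refine Finset.sum_congr rfl fun x _ => ?_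
      cases hgx : g x <;> simp [hgx]
    rw [hsplit]
    linarith
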